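/- Let G be a countable group and let F ⊂ F′ be finite symmetric subsets of G containing the identity. Then there exists a local function Φ : C_{F′} → {1,…,3^{|F|}}^G such that Φ_x ∈ C_F for every x ∈ C_{F′}. -/

import Mathlib

open Set Pointwise

/-- The finite set `S` is `(K, ε)`-invariant: `|⋂_{g ∈ K} gS| > (1 - ε)|S|`. -/
def FolnerInv {G : Type*} [Group G] (K : Finset G) (ε : ℝ) (S : Finset G) : Prop :=
  (1 - ε) * (S.card : ℝ) < ((⋂ g ∈ K, g • (S : Set G)).ncard : ℝ)

/-- `G` is amenable: there exist `(K, ε)`-invariant finite subsets for all `K` and `ε > 0`. -/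
def IsAmenableGroup (G : Type*) [Group G] : Prop :=
  ∀ (K : Finset G) (ε : ℝ), 0 < ε → ∃ S : Finset G, FolnerInv K ε S
/-- The space `C_F` of proper colorings of the Cayley graph `Cay(G, F)` with `3 ^ |F|`
colors. -/
def Colorings (G : Type*) [Group G] (F : Finset G) : Set (G → Fin (3 ^ F.card)) :=
  {x | ∀ g ∈ F, g ≠ 1 → ∀ h : G, x h ≠ x (g * h)}

/-- `Φ` is a local map on the (right-invariant) input set `𝓕 ⊆ Q^G`: the value `Φ x g` is
determined by the pattern of `x` in the window `W` around `g`. -/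
def IsLocalMap {G Q R : Type*} [Group G] (𝓕 : Set (G → Q)) (Φ : (G → Q) → (G → R)) : Prop :=
  ∃ (W : Finset G) (φ : (W → Q) → R),
    ∀ x ∈ 𝓕, ∀ g : G, Φ x g = φ fun h => x (↑h * g)

/-- `S : G → 2^D ⊔ {⋆}` is an exact tiling of `G`: the tiles `S(g)g` are pairwise disjoint
and cover `G`. -/
def IsExactTiling {G : Type*} [Group G] (D : Finset G) (S : G → Option (Finset G)) : Prop :=
  (∀ g T, S g = some T → T ⊆ D) ∧
  (∀ g g' : G, g ≠ g' → ∀ T T', S g = some T → S g' = some T' →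
    Disjoint ((· * g) '' (T : Set G)) ((· * g') '' (T' : Set G))) ∧
  (∀ a : G, ∃ g T, S g = some T ∧ a ∈ (· * g) '' (T : Set G))

/-- All shapes of the tiling `S` are `(K, ε)`-invariant. -/
def TilingInv {G : Type*} [Group G] (K : Finset G) (ε : ℝ) (S : G → Option (Finset G)) :
    Prop :=
  ∀ g T, S g = some T → FolnerInv K ε T

/-- `G` has a local tiling algorithm: for every finite `K ⊆ G` and `ε > 0` there are finite
symmetric `F, D ⊆ G` and a local function on `C_F` producing `(K, ε)`-invariant exact
tilings of `G` with shapes contained in `D`. -/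
def HasLocalTilingAlgorithm (G : Type*) [Group G] : Prop :=
  ∀ (K : Finset G) (ε : ℝ), 0 < ε →
    ∃ (F D : Finset G) (Φ : (G → Fin (3 ^ F.card)) → (G → Option (Finset G))),
      (1 : G) ∈ F ∧ (∀ g ∈ F, g⁻¹ ∈ F) ∧ (∀ g ∈ D, g⁻¹ ∈ D) ∧
      IsLocalMap (Colorings G F) Φ ∧
      ∀ x ∈ Colorings G F, IsExactTiling D (Φ x) ∧ TilingInv K ε (Φ x)


section MyColorAux
variable {G : Type*} [Group G] [DecidableEq G]

/-- The set of "forbidden" colors at `g`: new colors of `F`-neighbors with smaller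
original color. -/
def myColorBad (F : Finset G) (x : G → ℕ) (A : G → ℕ) (g : G) : Finset ℕ :=
  ((F.erase 1).filter fun h => x (h * g) < x g).image fun h => A (h * g)

/-- Stage-`k` greedy recoloring: correct at `g` whenever `x g < k`. -/
noncomputable def myColorAux (F : Finset G) (x : G → ℕ) : ℕ → G → ℕ
  | 0, _ => 0
  | (k+1), g => sInf {c : ℕ | c ∉ myColorBad F x (fun a => myColorAux F x k a) g}

lemma myColorBad_eta (F : Finset G) (x : G → ℕ) (A : G → ℕ) (g : G) :
    myColorBad F x (fun a => A a) g = myColorBad F x A g := rfl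

lemma myColorAux_succ (F : Finset G) (x : G → ℕ) (k : ℕ) (g : G) :
    myColorAux F x (k+1) g = sInf {c : ℕ | c ∉ myColorBad F x (myColorAux F x k) g} := rfl

lemma myColorAux_not_mem (F : Finset G) (x : G → ℕ) (k : ℕ) (g : G) :
    myColorAux F x (k+1) g ∉ myColorBad F x (myColorAux F x k) g := by
  obtain ⟨c, hc⟩ := Infinite.exists_notMem_finset (myColorBad F x (myColorAux F x k) g)
  have := Nat.sInf_mem (s := {c : ℕ | c ∉ myColorBad F x (myColorAux F x k) g}) ⟨c, hc⟩
  rw [myColorAux_succ]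
  exact this

lemma myColorAux_le (F : Finset G) (x : G → ℕ) (k : ℕ) (g : G) :
    myColorAux F x (k+1) g ≤ (F.erase 1).card := by
  set B := myColorBad F x (myColorAux F x k) g with hB
  have hcard : B.card ≤ (F.erase 1).card :=
    le_trans (Finset.card_image_le) (Finset.card_filter_le _ _)
  have : ¬ (Finset.range (B.card + 1) ⊆ B) := by
    intro h
    have := Finset.card_le_card h
    simp at this
  obtain ⟨c, hc1, hc2⟩ := Finset.not_subset.mp this
  have : myColorAux F x (k+1) g ≤ c := by
    rw [myColorAux_succ]; exact Nat.sInf_le hc2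
  have hc : c ≤ B.card := by simpa using Nat.lt_succ_iff.mp (Finset.mem_range.mp hc1)
  omega

lemma myColorAux_stable (F : Finset G) (x : G → ℕ) :
    ∀ (n : ℕ) (g : G) (k m : ℕ), x g ≤ n → x g < k → x g < m →
      myColorAux F x k g = myColorAux F x m g := by
  intro n
  induction n with
  | zero =>
    intro g k m hg hk hm
    obtain ⟨k, rfl⟩ : ∃ k', k = k' + 1 := ⟨k - 1, by omega⟩
    obtain ⟨m, rfl⟩ : ∃ m', m = m' + 1 := ⟨m - 1, by omega⟩
    rw [myColorAux_succ, myColorAux_succ]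
    have : ((F.erase 1).filter fun h => x (h * g) < x g) = ∅ := by
      apply Finset.filter_eq_empty_iff.mpr
      intro h _
      omega
    unfold myColorBad
    rw [this]
    simp
  | succ n ih =>
    intro g k m hg hk hm
    obtain ⟨k, rfl⟩ : ∃ k', k = k' + 1 := ⟨k - 1, by omega⟩
    obtain ⟨m, rfl⟩ : ∃ m', m = m' + 1 := ⟨m - 1, by omega⟩
    rw [myColorAux_succ, myColorAux_succ]
    have : myColorBad F x (myColorAux F x k) g = myColorBad F x (myColorAux F x m) g := by
      unfold myColorBad
      apply Finset.image_congr
      intro h hh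
      rw [Finset.coe_filter] at hh
      obtain ⟨hh1, hh2⟩ := hh
      exact ih (h * g) k m (by omega) (by omega) (by omega)
    rw [this]

lemma myColorAux_proper (F : Finset G) (x : G → ℕ) (g h : G)
    (hh : h ∈ F) (hh1 : h ≠ 1) (hlt : x (h * g) < x g) :
    myColorAux F x (x g + 1) g ≠ myColorAux F x (x (h * g) + 1) (h * g) := by
  intro heq
  apply myColorAux_not_mem F x (x g) g
  rw [heq]
  unfold myColorBad
  apply Finset.mem_image.mpr
  refine ⟨h, Finset.mem_filter.mpr ⟨Finset.mem_erase.mpr ⟨hh1, hh⟩, hlt⟩, ?_⟩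
  exact (myColorAux_stable F x (x (h * g)) (h * g) (x g) (x (h * g) + 1) le_rfl hlt (by omega))

lemma myColorAux_translate (F : Finset G) (x : G → ℕ) (g : G) :
    ∀ (k : ℕ) (t : G), myColorAux F (fun a => x (a * g)) k t = myColorAux F x k (t * g) := by
  intro k
  induction k with
  | zero => intro t; rfl
  | succ k ih =>
    intro t
    rw [myColorAux_succ, myColorAux_succ]
    have : myColorBad F (fun a => x (a * g)) (myColorAux F (fun a => x (a * g)) k) t
        = myColorBad F x (myColorAux F x k) (t * g) := by
      unfold myColorBad
      have hfil : ((F.erase 1).filter fun h => x (h * t * g) < x (t * g))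
          = ((F.erase 1).filter fun h => x (h * (t * g)) < x (t * g)) := by
        apply Finset.filter_congr
        intro h _
        rw [mul_assoc]
      rw [hfil]
      apply Finset.image_congr
      intro h _
      show myColorAux F (fun a => x (a * g)) k (h * t) = myColorAux F x k (h * (t * g))
      rw [ih (h * t), mul_assoc]
    rw [this]

/-- The window of radius `k`. -/
def myColorWindow (F : Finset G) : ℕ → Finset G
  | 0 => {1}
  | (k+1) => myColorWindow F k * F

lemma one_mem_myColorWindow (F : Finset G) (hF1 : (1 : G) ∈ F) :
    ∀ k, (1 : G) ∈ myColorWindow F k := by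
  intro k
  induction k with
  | zero => simp [myColorWindow]
  | succ k ih =>
    have := Finset.mul_mem_mul ih hF1
    simpa [myColorWindow] using this

lemma mem_myColorWindow_of_mem (F : Finset G) (k : ℕ) {a h : G}
    (ha : a ∈ myColorWindow F k) (hh : h ∈ F) : a * h ∈ myColorWindow F (k+1) :=
  Finset.mul_mem_mul ha hh

lemma myColorAux_window (F : Finset G) (hF1 : (1 : G) ∈ F) :
    ∀ (k : ℕ) (y y' : G → ℕ) (t : G),
      (∀ a ∈ myColorWindow F k, y (a * t) = y' (a * t)) →
      myColorAux F y k t = myColorAux F y' k t := by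
  intro k
  induction k with
  | zero => intros; rfl
  | succ k ih =>
    intro y y' t hyy'
    have hyt : y t = y' t := by
      have := hyy' 1 (one_mem_myColorWindow F hF1 (k+1))
      simpa using this
    have hyht : ∀ h ∈ F, y (h * t) = y' (h * t) := by
      intro h hh
      have hmem : (1 : G) * h ∈ myColorWindow F (k+1) :=
        mem_myColorWindow_of_mem F k (one_mem_myColorWindow F hF1 k) hh
      have := hyy' (1 * h) hmem
      simpa using this
    rw [myColorAux_succ, myColorAux_succ]
    have : myColorBad F y (myColorAux F y k) t = myColorBad F y' (myColorAux F y' k) t := by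
      unfold myColorBad
      have hfil : ((F.erase 1).filter fun h => y (h * t) < y t)
          = ((F.erase 1).filter fun h => y' (h * t) < y' t) := by
        apply Finset.filter_congr
        intro h hh
        rw [hyt, hyht h (Finset.mem_erase.mp hh).2]
      rw [hfil]
      apply Finset.image_congr
      intro h hh
      show myColorAux F y k (h * t) = myColorAux F y' k (h * t)
      have hhF : h ∈ F := by
        rw [Finset.coe_filter] at hh
        exact (Finset.mem_erase.mp hh.1).2
      apply ih
      intro a ha
      have := hyy' (a * h) (mem_myColorWindow_of_mem F k ha hhF)
      simpa [mul_assoc] using this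
    rw [this]

end MyColorAux

/-- If `F ⊆ F'` are finite symmetric subsets of a countable group
containing the identity, then there is a local function from `C_{F'}` to `C_F`. -/
theorem local_coloring_reduction {G : Type*} [Group G] [Countable G] [Infinite G]
    (F F' : Finset G) (hFF' : F ⊆ F')
    (hF1 : (1 : G) ∈ F) (hFsymm : ∀ g ∈ F, g⁻¹ ∈ F)
    (hF'1 : (1 : G) ∈ F') (hF'symm : ∀ g ∈ F', g⁻¹ ∈ F') :
    ∃ Φ : (G → Fin (3 ^ F'.card)) → (G → Fin (3 ^ F.card)),
      IsLocalMap (Colorings G F') Φ ∧ ∀ x ∈ Colorings G F', Φ x ∈ Colorings G F := by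
  classical
  set N : ℕ := 3 ^ F'.card with hN
  have hNpos : 0 < N := Nat.pow_pos (by norm_num)
  have hpow : 0 < 3 ^ F.card := Nat.pow_pos (by norm_num)
  -- the bound : any output of myColorAux at stage ≥ 1 is < 3 ^ F.card
  have hbound : ∀ (y : G → ℕ) (k : ℕ) (g : G), 0 < k → myColorAux F y k g < 3 ^ F.card := by
    intro y k g hk
    obtain ⟨k, rfl⟩ : ∃ k', k = k' + 1 := ⟨k - 1, by omega⟩
    have h1 := myColorAux_le F y k g
    have h2 : (F.erase 1).card < F.card := Finset.card_erase_lt_of_mem hF1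
    have h3 : F.card < 3 ^ F.card := Nat.lt_pow_self (by norm_num)
    omega
  set W : Finset G := myColorWindow F N with hW
  refine ⟨fun x g => ⟨myColorAux F (fun a => ((x a : ℕ))) N g, hbound _ _ _ hNpos⟩,
    ⟨W, fun y => ⟨myColorAux F (fun a => if h : a ∈ W then ((y ⟨a, h⟩ : ℕ)) else 0) N 1,
      hbound _ _ _ hNpos⟩, ?_⟩, ?_⟩
  · -- locality
    intro x _ g
    apply Fin.ext
    show myColorAux F (fun a => ((x a : ℕ))) N g
      = myColorAux F (fun a => if h : a ∈ W then ((x ((↑(⟨a, h⟩ : W) : G) * g) : ℕ)) else 0) N 1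
    have h1 : myColorAux F
        (fun a => if h : a ∈ W then ((x ((↑(⟨a, h⟩ : W) : G) * g) : ℕ)) else 0) N 1
        = myColorAux F (fun a => ((x (a * g) : ℕ))) N 1 := by
      apply myColorAux_window F hF1
      intro a ha
      simp only [mul_one]
      rw [dif_pos ha]
    rw [h1, myColorAux_translate F (fun a => ((x a : ℕ))) g N 1, one_mul]
  · -- properness
    intro x hx
    intro h hhF hh1 g
    have hxne : ((x g : ℕ)) ≠ ((x (h * g) : ℕ)) := by
      intro heq
      exact hx h (hFF' hhF) hh1 g (Fin.ext heq)
    set y : G → ℕ := fun a => ((x a : ℕ)) with hy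
    have hylt : ∀ a : G, y a < N := fun a => (x a).isLt
    apply Fin.ne_of_val_ne
    show myColorAux F y N g ≠ myColorAux F y N (h * g)
    rcases lt_or_gt_of_ne hxne with hlt | hlt
    · -- y g < y (h * g) : apply proper at (h*g) with neighbor h⁻¹
      have := myColorAux_proper F y (h * g) h⁻¹ (hFsymm h hhF)
        (by simpa using hh1) (by rw [inv_mul_cancel_left]; exact hlt)
      rw [inv_mul_cancel_left] at this
      have e1 : myColorAux F y N g = myColorAux F y (y g + 1) g :=
        myColorAux_stable F y (y g) g N (y g + 1) le_rfl (hylt g) (by omega)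
      have e2 : myColorAux F y N (h * g) = myColorAux F y (y (h * g) + 1) (h * g) :=
        myColorAux_stable F y (y (h * g)) (h * g) N (y (h * g) + 1) le_rfl (hylt _) (by omega)
      rw [e1, e2]
      exact fun hc => this hc.symm
    · -- y (h * g) < y g
      have := myColorAux_proper F y g h hhF hh1 hlt
      have e1 : myColorAux F y N g = myColorAux F y (y g + 1) g :=
        myColorAux_stable F y (y g) g N (y g + 1) le_rfl (hylt g) (by omega)
      have e2 : myColorAux F y N (h * g) = myColorAux F y (y (h * g) + 1) (h * g) :=
        myColorAux_stable F y (y (h * g)) (h * g) N (y (h * g) + 1) le_rfl (hylt _) (by omega)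
      rw [e1, e2]
      exact this
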